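/- Let U ⊆ ℂ be open, g : U → ℂ holomorphic with g'(z) ≠ 0 for all z ∈ U, and f a holomorphic function defined on an open set containing g(U). Then the function h(u,v) = ⟨1, f'(g(z))⟩ − 2 ⟨g(z), f(g(z))⟩ / ( 1 + |g(z)|² ), z = u+iv, i.e. h = Re(f'∘g) − 2 Re( ḡ · (f∘g) )/(1+|g|²), satisfies the Helmholtz equation Δh + ( 8|g'|² / (1+|g|²)² ) h = 0 on U; consequently the associated surface is an H₁-surface. -/

import Mathlib

open Complex

noncomputable section

/-- Euclidean inner product on ℂ ≅ ℝ²: ⟨w₁,w₂⟩ = Re(w̄₁ w₂). -/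
def inn (w₁ w₂ : ℂ) : ℝ := ((starRingEnd ℂ) w₁ * w₂).re

/-- Partial derivative in u (z = u + iv). -/
def pd1 (f : ℂ → ℝ) (z : ℂ) : ℝ := fderiv ℝ f z 1
/-- Partial derivative in v (z = u + iv). -/
def pd2 (f : ℂ → ℝ) (z : ℂ) : ℝ := fderiv ℝ f z Complex.I
/-- Euclidean Laplacian Δf = f_{,11} + f_{,22}. -/
def lap (f : ℂ → ℝ) (z : ℂ) : ℝ := pd1 (pd1 f) z + pd2 (pd2 f) z

/-- Partial derivative in u of an ℝ³ ≅ ℂ × ℝ valued map. -/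
def pdv1 (f : ℂ → ℂ × ℝ) (z : ℂ) : ℂ × ℝ := fderiv ℝ f z 1
/-- Partial derivative in v of an ℝ³ ≅ ℂ × ℝ valued map. -/
def pdv2 (f : ℂ → ℂ × ℝ) (z : ℂ) : ℂ × ℝ := fderiv ℝ f z Complex.I
/-- Euclidean inner product on ℝ³ ≅ ℂ × ℝ. -/
def inn3 (p q : ℂ × ℝ) : ℝ := inn p.1 q.1 + p.2 * q.2

set_option maxHeartbeats 1000000

def rD (d : ℂ) : ℂ →L[ℝ] ℝ :=
  Complex.reCLM.comp ((ContinuousLinearMap.smulRight (1 : ℂ →L[ℂ] ℂ) d).restrictScalars ℝ)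

def iD (d : ℂ) : ℂ →L[ℝ] ℝ :=
  Complex.imCLM.comp ((ContinuousLinearMap.smulRight (1 : ℂ →L[ℂ] ℂ) d).restrictScalars ℝ)

@[simp] lemma rD_apply (d t : ℂ) : rD d t = (d * t).re := by simp [rD, mul_comm]
@[simp] lemma iD_apply (d t : ℂ) : iD d t = (d * t).im := by simp [iD, mul_comm]

lemma hre {G : ℂ → ℂ} {d w : ℂ} (h : HasDerivAt G d w) :
    HasFDerivAt (fun z => (G z).re) (rD d) w :=
  Complex.reCLM.hasFDerivAt.comp w (h.hasFDerivAt.restrictScalars ℝ)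

lemma him {G : ℂ → ℂ} {d w : ℂ} (h : HasDerivAt G d w) :
    HasFDerivAt (fun z => (G z).im) (iD d) w :=
  Complex.imCLM.hasFDerivAt.comp w (h.hasFDerivAt.restrictScalars ℝ)

/-- first directional derivative of the quotient part + Re q. -/
def EE (a a' b q s : ℂ → ℂ) (t w : ℂ) : ℝ :=
  ((s w * a' w) * t).re -
  ( 2*((a' w * t).re*(b w).re + (a w).re*((q w * a' w) * t).re
      + ((a' w * t).im*(b w).im + (a w).im*((q w * a' w) * t).im))
      * (1+((a w).re*(a w).re+(a w).im*(a w).im))⁻¹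
    - 2*((a w).re*(b w).re+(a w).im*(b w).im)
      * (2*((a w).re*(a' w * t).re) + 2*((a w).im*(a' w * t).im))
      * ((1+((a w).re*(a w).re+(a w).im*(a w).im))
          * (1+((a w).re*(a w).re+(a w).im*(a w).im)))⁻¹ )

lemma key (U : Set ℂ) (hU : IsOpen U) (a a' a₂ b q s : ℂ → ℂ) (s₂ : ℂ) (z : ℂ) (hz : z ∈ U)
    (ha : ∀ w ∈ U, HasDerivAt a (a' w) w)
    (ha' : ∀ w ∈ U, HasDerivAt a' (a₂ w) w)
    (hb : ∀ w ∈ U, HasDerivAt b (q w * a' w) w)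
    (hq : ∀ w ∈ U, HasDerivAt q (s w * a' w) w)
    (hs : HasDerivAt s s₂ z) :
    lap (fun w => (q w).re -
        2*((a w).re*(b w).re+(a w).im*(b w).im)
          * (1+((a w).re*(a w).re+(a w).im*(a w).im))⁻¹) z
      + (8*((a' z).re*(a' z).re+(a' z).im*(a' z).im)
          * ((1+((a z).re*(a z).re+(a z).im*(a z).im))
            * (1+((a z).re*(a z).re+(a z).im*(a z).im)))⁻¹) *
        ((q z).re - 2*((a z).re*(b z).re+(a z).im*(b z).im)
          * (1+((a z).re*(a z).re+(a z).im*(a z).im))⁻¹) = 0 := by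
  have hρ : ∀ x : ℂ, (0:ℝ) < 1+((a x).re*(a x).re+(a x).im*(a x).im) := by
    intro x
    nlinarith [sq_nonneg (a x).re, sq_nonneg (a x).im]
  -- Step 1: first derivative of h in any direction t, at any w ∈ U
  have hfd : ∀ t : ℂ, ∀ w ∈ U,
      fderiv ℝ (fun x => (q x).re -
        2*((a x).re*(b x).re+(a x).im*(b x).im)
          * (1+((a x).re*(a x).re+(a x).im*(a x).im))⁻¹) w t = EE a a' b q s t w := by
    intro t w hw
    have Hx1 := hre (ha w hw); have Hx2 := him (ha w hw)
    have Hy1 := hre (hb w hw); have Hy2 := him (hb w hw)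
    have Hq1 := hre (hq w hw)
    have Hden : HasFDerivAt (fun x => 1+((a x).re*(a x).re+(a x).im*(a x).im)) _ w :=
      ((Hx1.mul Hx1).add (Hx2.mul Hx2)).const_add 1
    have Hinv : HasFDerivAt
        (fun x => (1+((a x).re*(a x).re+(a x).im*(a x).im))⁻¹) _ w :=
      (hasDerivAt_inv (hρ w).ne').comp_hasFDerivAt w Hden
    have HH : HasFDerivAt (fun x => (q x).re -
        2*((a x).re*(b x).re+(a x).im*(b x).im)
          * (1+((a x).re*(a x).re+(a x).im*(a x).im))⁻¹) _ w :=
      Hq1.sub ((((Hx1.mul Hy1).add (Hx2.mul Hy2)).const_mul 2).mul Hinv)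
    rw [HH.fderiv]
    simp only [EE, ContinuousLinearMap.sub_apply, ContinuousLinearMap.add_apply,
      ContinuousLinearMap.smul_apply, smul_eq_mul, rD_apply, iD_apply, Pi.mul_apply, Pi.add_apply]
    ring
  -- Step 2: pd1/pd2 agree with EE near z
  have hev1 : pd1 (fun x => (q x).re -
      2*((a x).re*(b x).re+(a x).im*(b x).im)
        * (1+((a x).re*(a x).re+(a x).im*(a x).im))⁻¹) =ᶠ[nhds z] EE a a' b q s 1 := by
    filter_upwards [hU.mem_nhds hz] with w hw
    exact hfd 1 w hw
  have hevI : pd2 (fun x => (q x).re -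
      2*((a x).re*(b x).re+(a x).im*(b x).im)
        * (1+((a x).re*(a x).re+(a x).im*(a x).im))⁻¹) =ᶠ[nhds z] EE a a' b q s Complex.I := by
    filter_upwards [hU.mem_nhds hz] with w hw
    exact hfd Complex.I w hw
  have e1 : lap (fun x => (q x).re -
      2*((a x).re*(b x).re+(a x).im*(b x).im)
        * (1+((a x).re*(a x).re+(a x).im*(a x).im))⁻¹) z
      = fderiv ℝ (EE a a' b q s 1) z 1 + fderiv ℝ (EE a a' b q s Complex.I) z Complex.I := by
    show fderiv ℝ (pd1 _) z 1 + fderiv ℝ (pd2 _) z Complex.I = _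
    rw [hev1.fderiv_eq, hevI.fderiv_eq]
  rw [e1]
  -- Step 3: second derivatives via builders
  have hEE : ∀ t : ℂ, EE a a' b q s t = fun w =>
      ((s w * a' w) * t).re -
      ( 2*((a' w * t).re*(b w).re + (a w).re*((q w * a' w) * t).re
          + ((a' w * t).im*(b w).im + (a w).im*((q w * a' w) * t).im))
          * (1+((a w).re*(a w).re+(a w).im*(a w).im))⁻¹
        - 2*((a w).re*(b w).re+(a w).im*(b w).im)
          * (2*((a w).re*(a' w * t).re) + 2*((a w).im*(a' w * t).im))
          * ((1+((a w).re*(a w).re+(a w).im*(a w).im))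
              * (1+((a w).re*(a w).re+(a w).im*(a w).im)))⁻¹ ) := fun t => rfl
  have Hx1 := hre (ha z hz); have Hx2 := him (ha z hz)
  have Hy1 := hre (hb z hz); have Hy2 := him (hb z hz)
  have Hden : HasFDerivAt (fun x => 1+((a x).re*(a x).re+(a x).im*(a x).im)) _ z :=
    ((Hx1.mul Hx1).add (Hx2.mul Hx2)).const_add 1
  have Hinv : HasFDerivAt
      (fun x => (1+((a x).re*(a x).re+(a x).im*(a x).im))⁻¹) _ z :=
    (hasDerivAt_inv (hρ z).ne').comp_hasFDerivAt z Hden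
  have Hden2 : HasFDerivAt (fun x => (1+((a x).re*(a x).re+(a x).im*(a x).im))
      * (1+((a x).re*(a x).re+(a x).im*(a x).im))) _ z := Hden.mul Hden
  have hρ2 : (1+((a z).re*(a z).re+(a z).im*(a z).im))
      * (1+((a z).re*(a z).re+(a z).im*(a z).im)) ≠ 0 := mul_ne_zero (hρ z).ne' (hρ z).ne'
  have Hinv2 : HasFDerivAt (fun x => ((1+((a x).re*(a x).re+(a x).im*(a x).im))
      * (1+((a x).re*(a x).re+(a x).im*(a x).im)))⁻¹) _ z :=
    (hasDerivAt_inv hρ2).comp_hasFDerivAt z Hden2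
  -- builders at t = 1
  have D1a : HasDerivAt (fun w => a' w * (1:ℂ)) (a₂ z * 1) z := (ha' z hz).mul_const 1
  have D1b : HasDerivAt (fun w => q w * a' w * (1:ℂ))
      ((s z * a' z * a' z + q z * a₂ z) * 1) z := ((hq z hz).mul (ha' z hz)).mul_const 1
  have D1s : HasDerivAt (fun w => s w * a' w * (1:ℂ))
      ((s₂ * a' z + s z * a₂ z) * 1) z := (hs.mul (ha' z hz)).mul_const 1
  have HE1 : HasFDerivAt (fun w =>
      ((s w * a' w) * (1:ℂ)).re -
      ( 2*((a' w * (1:ℂ)).re*(b w).re + (a w).re*((q w * a' w) * (1:ℂ)).re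
          + ((a' w * (1:ℂ)).im*(b w).im + (a w).im*((q w * a' w) * (1:ℂ)).im))
          * (1+((a w).re*(a w).re+(a w).im*(a w).im))⁻¹
        - 2*((a w).re*(b w).re+(a w).im*(b w).im)
          * (2*((a w).re*(a' w * (1:ℂ)).re) + 2*((a w).im*(a' w * (1:ℂ)).im))
          * ((1+((a w).re*(a w).re+(a w).im*(a w).im))
              * (1+((a w).re*(a w).re+(a w).im*(a w).im)))⁻¹ )) _ z :=
    (hre D1s).sub
      (((((((hre D1a).mul Hy1).add (Hx1.mul (hre D1b))).add
          (((him D1a).mul Hy2).add (Hx2.mul (him D1b)))).const_mul 2).mul Hinv).sub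
        (((((Hx1.mul Hy1).add (Hx2.mul Hy2)).const_mul 2).mul
          (((Hx1.mul (hre D1a)).const_mul 2).add ((Hx2.mul (him D1a)).const_mul 2))).mul Hinv2))
  -- builders at t = I
  have DIa : HasDerivAt (fun w => a' w * Complex.I) (a₂ z * Complex.I) z :=
    (ha' z hz).mul_const Complex.I
  have DIb : HasDerivAt (fun w => q w * a' w * Complex.I)
      ((s z * a' z * a' z + q z * a₂ z) * Complex.I) z :=
    ((hq z hz).mul (ha' z hz)).mul_const Complex.I
  have DIs : HasDerivAt (fun w => s w * a' w * Complex.I)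
      ((s₂ * a' z + s z * a₂ z) * Complex.I) z := (hs.mul (ha' z hz)).mul_const Complex.I
  have HEI : HasFDerivAt (fun w =>
      ((s w * a' w) * Complex.I).re -
      ( 2*((a' w * Complex.I).re*(b w).re + (a w).re*((q w * a' w) * Complex.I).re
          + ((a' w * Complex.I).im*(b w).im + (a w).im*((q w * a' w) * Complex.I).im))
          * (1+((a w).re*(a w).re+(a w).im*(a w).im))⁻¹
        - 2*((a w).re*(b w).re+(a w).im*(b w).im)
          * (2*((a w).re*(a' w * Complex.I).re) + 2*((a w).im*(a' w * Complex.I).im))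
          * ((1+((a w).re*(a w).re+(a w).im*(a w).im))
              * (1+((a w).re*(a w).re+(a w).im*(a w).im)))⁻¹ )) _ z :=
    (hre DIs).sub
      (((((((hre DIa).mul Hy1).add (Hx1.mul (hre DIb))).add
          (((him DIa).mul Hy2).add (Hx2.mul (him DIb)))).const_mul 2).mul Hinv).sub
        (((((Hx1.mul Hy1).add (Hx2.mul Hy2)).const_mul 2).mul
          (((Hx1.mul (hre DIa)).const_mul 2).add ((Hx2.mul (him DIa)).const_mul 2))).mul Hinv2))
  rw [hEE 1, hEE Complex.I, HE1.fderiv, HEI.fderiv]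
  simp only [ContinuousLinearMap.sub_apply, ContinuousLinearMap.add_apply,
    ContinuousLinearMap.smul_apply, smul_eq_mul, rD_apply, iD_apply, mul_one, Pi.mul_apply, Pi.add_apply,
    Complex.mul_re, Complex.mul_im, Complex.I_re, Complex.I_im, Complex.one_re,
    Complex.one_im]
  have hne := (hρ z).ne'
  field_simp
  ring

/-- Proposition 3.7: h = ⟨1, f'∘g⟩ − 2⟨g, f∘g⟩/(1+|g|²) solves the
Helmholtz equation Δh + (8|g'|²/(1+|g|²)²)h = 0, so the associated surface is an
H₁-surface. -/
theorem stmt_13 (U V : Set ℂ) (hU : IsOpen U) (hV : IsOpen V)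
    (g g' : ℂ → ℂ) (hg : ∀ z ∈ U, HasDerivAt g (g' z) z) (hg' : ∀ z ∈ U, g' z ≠ 0)
    (hmaps : Set.MapsTo g U V)
    (f f' : ℂ → ℂ) (hf : ∀ w ∈ V, HasDerivAt f (f' w) w) :
    ∀ z ∈ U,
      lap (fun w =>
          inn 1 (f' (g w)) - 2 * inn (g w) (f (g w)) / (1 + ‖g w‖ ^ 2)) z
        + (8 * ‖g' z‖ ^ 2 / (1 + ‖g z‖ ^ 2) ^ 2) *
          (inn 1 (f' (g z)) - 2 * inn (g z) (f (g z)) / (1 + ‖g z‖ ^ 2)) = 0 := by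
  intro z hz
  have hgU : DifferentiableOn ℂ g U :=
    fun w hw => ((hg w hw).differentiableAt).differentiableWithinAt
  have hgA : AnalyticOnNhd ℂ g U := hgU.analyticOnNhd hU
  have hfV : DifferentiableOn ℂ f V :=
    fun w hw => ((hf w hw).differentiableAt).differentiableWithinAt
  have hfA : AnalyticOnNhd ℂ f V := hfV.analyticOnNhd hV
  have ha' : ∀ w ∈ U, HasDerivAt g' (deriv (deriv g) w) w := by
    intro w hw
    have h1 : HasDerivAt (deriv g) (deriv (deriv g) w) w :=
      ((hgA.deriv w hw).differentiableAt).hasDerivAt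
    refine h1.congr_of_eventuallyEq ?_
    filter_upwards [hU.mem_nhds hw] with x hx
    exact ((hg x hx).deriv).symm
  have hf'd : ∀ v ∈ V, HasDerivAt f' (deriv (deriv f) v) v := by
    intro v hv
    have h1 : HasDerivAt (deriv f) (deriv (deriv f) v) v :=
      ((hfA.deriv v hv).differentiableAt).hasDerivAt
    refine h1.congr_of_eventuallyEq ?_
    filter_upwards [hV.mem_nhds hv] with x hx
    exact ((hf x hx).deriv).symm
  have hb : ∀ w ∈ U, HasDerivAt (fun x => f (g x)) (f' (g w) * g' w) w :=
    fun w hw => (hf (g w) (hmaps hw)).comp w (hg w hw)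
  have hq : ∀ w ∈ U, HasDerivAt (fun x => f' (g x)) (deriv (deriv f) (g w) * g' w) w :=
    fun w hw => (hf'd (g w) (hmaps hw)).comp w (hg w hw)
  have hs : HasDerivAt (fun x => deriv (deriv f) (g x))
      (deriv (deriv (deriv f)) (g z) * g' z) z :=
    ((((hfA.deriv.deriv (g z) (hmaps hz)).differentiableAt).hasDerivAt)).comp z (hg z hz)
  have K := key U hU g g' (deriv (deriv g)) (fun x => f (g x)) (fun x => f' (g x))
      (fun x => deriv (deriv f) (g x)) (deriv (deriv (deriv f)) (g z) * g' z) z hz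
      hg ha' hb hq hs
  have e1 : (fun w => inn 1 (f' (g w)) - 2 * inn (g w) (f (g w)) / (1 + ‖g w‖ ^ 2))
      = (fun w => (f' (g w)).re - 2*((g w).re*(f (g w)).re+(g w).im*(f (g w)).im)
          * (1+((g w).re*(g w).re+(g w).im*(g w).im))⁻¹) := by
    funext w
    have h2 : (‖g w‖)^2 = (g w).re*(g w).re+(g w).im*(g w).im := by
      rw [Complex.sq_norm, Complex.normSq_apply]
    rw [h2]
    simp only [inn, map_one, one_mul, Complex.mul_re, Complex.conj_re, Complex.conj_im]
    ring
  rw [e1]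
  have e2 : (8 * ‖g' z‖ ^ 2 / (1 + ‖g z‖ ^ 2) ^ 2) *
      (inn 1 (f' (g z)) - 2 * inn (g z) (f (g z)) / (1 + ‖g z‖ ^ 2))
    = (8*((g' z).re*(g' z).re+(g' z).im*(g' z).im)
        * ((1+((g z).re*(g z).re+(g z).im*(g z).im))
          * (1+((g z).re*(g z).re+(g z).im*(g z).im)))⁻¹) *
      ((f' (g z)).re - 2*((g z).re*(f (g z)).re+(g z).im*(f (g z)).im)
        * (1+((g z).re*(g z).re+(g z).im*(g z).im))⁻¹) := by
    rw [Complex.sq_norm, Complex.sq_norm, Complex.normSq_apply, Complex.normSq_apply]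
    simp only [inn, map_one, one_mul, Complex.mul_re, Complex.conj_re, Complex.conj_im]
    ring
  rw [e2]
  exact K
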